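/- Let Φ⁻¹ be the standard Gaussian inverse CDF and for b ∈ (0, 1/2) set z_b = Φ⁻¹(b). The L²-optimal linear fit α + β·u to Φ⁻¹ on [0, b] has gradient β = (6/b³)·(Φ(√2·z_b)/√π − b·φ(z_b)) and intercept α = 2φ(z_b)/b − 3Φ(√2·z_b)/(b²·√π). -/

import Mathlib

open Real MeasureTheory Set Filter

noncomputable def phi (z : ℝ) : ℝ := (Real.sqrt (2 * Real.pi))⁻¹ * Real.exp (-z ^ 2 / 2)

noncomputable def Phi (z : ℝ) : ℝ := ∫ s in Set.Iic z, phi s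

lemma phi_eq (z : ℝ) : phi z = (Real.sqrt (2 * Real.pi))⁻¹ * Real.exp (-(1/2 : ℝ) * z ^ 2) := by
  unfold phi; ring_nf

lemma phi_pos (z : ℝ) : 0 < phi z := by
  unfold phi
  positivity

lemma phi_cont : Continuous phi := by
  unfold phi
  continuity

lemma phi_integrable : Integrable phi := by
  have h := (integrable_exp_neg_mul_sq (by norm_num : (0:ℝ) < 1/2)).const_mul
    ((Real.sqrt (2 * Real.pi))⁻¹)
  refine h.congr ?_
  filter_upwards with z
  rw [phi_eq]

lemma id_mul_phi_integrable : Integrable (fun z => z * phi z) := by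
  have h := (integrable_mul_exp_neg_mul_sq (by norm_num : (0:ℝ) < 1/2)).const_mul
    ((Real.sqrt (2 * Real.pi))⁻¹)
  refine h.congr ?_
  filter_upwards with z
  rw [phi_eq]; ring

lemma sq_mul_phi_integrable : Integrable (fun z => z ^ 2 * phi z) := by
  have hg : Integrable (fun z : ℝ => ((Real.sqrt (2 * Real.pi))⁻¹ * 4) * Real.exp (-(1/4 : ℝ) * z ^ 2)) :=
    (integrable_exp_neg_mul_sq (by norm_num : (0:ℝ) < 1/4)).const_mul _
  refine hg.mono' ?_ ?_
  · exact ((continuous_pow 2).mul phi_cont).aestronglyMeasurable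
  · filter_upwards with z
    rw [Real.norm_eq_abs, abs_of_nonneg (mul_nonneg (sq_nonneg z) (phi_pos z).le), phi_eq]
    have h1 : Real.exp (-(1/2 : ℝ) * z ^ 2) = Real.exp (-(1/4:ℝ) * z^2) * Real.exp (-(1/4:ℝ) * z^2) := by
      rw [← Real.exp_add]; ring_nf
    rw [h1]
    have h2 : z ^ 2 * Real.exp (-(1/4:ℝ) * z^2) ≤ 4 := by
      have ht : (1/4 : ℝ) * z ^ 2 ≤ Real.exp ((1/4:ℝ) * z^2) := by
        have := Real.add_one_le_exp ((1/4:ℝ) * z^2)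
        nlinarith
      have hE : Real.exp ((1/4:ℝ) * z^2) * Real.exp (-(1/4:ℝ) * z^2) = 1 := by
        rw [← Real.exp_add]; ring_nf; exact Real.exp_zero
      nlinarith [Real.exp_pos (-(1/4:ℝ)*z^2), Real.exp_pos ((1/4:ℝ)*z^2)]
    have hc : (0:ℝ) < (Real.sqrt (2 * Real.pi))⁻¹ := by
      have := Real.pi_pos; positivity
    calc z ^ 2 * ((Real.sqrt (2 * Real.pi))⁻¹ * (Real.exp (-(1/4:ℝ)*z^2) * Real.exp (-(1/4:ℝ)*z^2)))
        = (Real.sqrt (2 * Real.pi))⁻¹ * ((z^2 * Real.exp (-(1/4:ℝ)*z^2)) * Real.exp (-(1/4:ℝ)*z^2)) := by ring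
      _ ≤ (Real.sqrt (2 * Real.pi))⁻¹ * (4 * Real.exp (-(1/4:ℝ)*z^2)) := by
          apply mul_le_mul_of_nonneg_left _ hc.le
          exact mul_le_mul_of_nonneg_right h2 (Real.exp_pos _).le
      _ = (Real.sqrt (2 * Real.pi))⁻¹ * 4 * Real.exp (-(1/4:ℝ)*z^2) := by ring

lemma hasDerivAt_Phi (z : ℝ) : HasDerivAt Phi (phi z) z := by
  have key : ∀ x : ℝ, Phi x = (∫ t in (0:ℝ)..x, phi t) + Phi 0 := by
    intro x
    have := intervalIntegral.integral_Iic_sub_Iic (phi_integrable.integrableOn (s := Iic (0:ℝ)))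
      (phi_integrable.integrableOn (s := Iic x))
    unfold Phi
    linarith [this]
  have h1 : HasDerivAt (fun x => (∫ t in (0:ℝ)..x, phi t) + Phi 0) (phi z) z := by
    apply HasDerivAt.add_const
    exact intervalIntegral.integral_hasDerivAt_right
      phi_integrable.intervalIntegrable
      (phi_cont.stronglyMeasurableAtFilter _ _) phi_cont.continuousAt
  exact h1.congr_of_eventuallyEq (Filter.Eventually.of_forall key)

lemma Phi_cont : Continuous Phi :=
  continuous_iff_continuousAt.2 fun z => (hasDerivAt_Phi z).continuousAt

lemma Phi_strictMono : StrictMono Phi := by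
  apply strictMono_of_deriv_pos
  intro x
  rw [(hasDerivAt_Phi x).deriv]
  exact phi_pos x

lemma Phi_pos (z : ℝ) : 0 < Phi z := by
  unfold Phi
  rw [setIntegral_pos_iff_support_of_nonneg_ae]
  · have : Function.support phi ∩ Iic z = Iic z := by
      apply inter_eq_right.2
      intro x _
      exact (phi_pos x).ne'
    rw [this]
    simp
  · filter_upwards with x using (phi_pos x).le
  · exact phi_integrable.integrableOn

lemma Phi_le_one (z : ℝ) : Phi z ≤ 1 := by
  have h1 : (∫ z, phi z) = 1 := by
    have : (∫ z : ℝ, Real.exp (-(1/2:ℝ) * z ^ 2)) = Real.sqrt (Real.pi / (1/2)) :=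
      integral_gaussian (1/2)
    have heq : (∫ z, phi z) = (Real.sqrt (2 * Real.pi))⁻¹ * ∫ z : ℝ, Real.exp (-(1/2:ℝ) * z ^ 2) := by
      rw [← integral_const_mul]
      congr 1; funext z; rw [phi_eq]
    rw [heq, this]
    have : Real.pi / (1/2 : ℝ) = 2 * Real.pi := by ring
    rw [this, inv_mul_cancel₀]
    positivity
  calc Phi z ≤ ∫ z, phi z := by
        apply setIntegral_le_integral phi_integrable
        filter_upwards with x using (phi_pos x).le
    _ = 1 := h1

lemma Phi_tendsto_atBot : Tendsto Phi atBot (nhds 0) := by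
  have h := intervalIntegral_tendsto_integral_Iic (0:ℝ)
    (phi_integrable.integrableOn) tendsto_id
  have heq : ∀ a : ℝ, (∫ x in a..(0:ℝ), phi x) = Phi 0 - Phi a := by
    intro a
    have := intervalIntegral.integral_Iic_sub_Iic (phi_integrable.integrableOn (s := Iic a))
      (phi_integrable.integrableOn (s := Iic (0:ℝ)))
    unfold Phi; linarith
  have h2 : Tendsto (fun a => Phi 0 - Phi a) atBot (nhds (Phi 0)) := by
    refine Tendsto.congr (fun a => (heq a)) ?_
    exact h
  have h3 := (tendsto_const_nhds (x := Phi 0) (f := atBot)).sub h2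
  simpa using h3

lemma Phi_image (c : ℝ) : Phi '' (Iio c) = Ioo 0 (Phi c) := by
  ext u
  constructor
  · rintro ⟨z, hz, rfl⟩
    exact ⟨Phi_pos z, Phi_strictMono hz⟩
  · rintro ⟨hu0, huc⟩
    have : ∀ᶠ a in atBot, Phi a < u := Phi_tendsto_atBot.eventually_lt_const hu0
    obtain ⟨a, ha⟩ := this.exists
    have hac : a < c := by
      by_contra hcon
      push_neg at hcon
      exact absurd (Phi_strictMono.monotone hcon) (by linarith)
    obtain ⟨z, hz, hPz⟩ := intermediate_value_Icc hac.le Phi_cont.continuousOn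
      (⟨ha.le, huc.le⟩ : u ∈ Icc (Phi a) (Phi c))
    refine ⟨z, ?_, hPz⟩
    rcases lt_or_eq_of_le hz.2 with h | h
    · exact h
    · exfalso; rw [h] at hPz; exact absurd hPz (by linarith)

lemma hasDerivAt_phi (z : ℝ) : HasDerivAt phi (-z * phi z) z := by
  have h1 : HasDerivAt (fun z : ℝ => -z ^ 2 / 2) (-z) z := by
    have := ((hasDerivAt_pow 2 z).neg).div_const 2
    simpa using this.congr_deriv (by ring)
  have h2 := (h1.exp).const_mul ((Real.sqrt (2 * Real.pi))⁻¹)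
  unfold phi
  exact h2.congr_deriv (by ring)

lemma phi_tendsto_atBot : Tendsto phi atBot (nhds 0) := by
  have h0 : Tendsto (fun z : ℝ => z ^ 2) atBot atTop := by
    refine tendsto_atTop_mono' atBot ?_ tendsto_neg_atBot_atTop
    filter_upwards [eventually_le_atBot (-1 : ℝ)] with z hz
    nlinarith
  have h1 : Tendsto (fun z : ℝ => -z ^ 2 / 2) atBot atBot := by
    apply Tendsto.atBot_div_const (by norm_num)
    exact (tendsto_neg_atTop_atBot.comp h0)
  have h2 := Real.tendsto_exp_atBot.comp h1
  have h3 := h2.const_mul ((Real.sqrt (2 * Real.pi))⁻¹)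
  rw [show (0:ℝ) = (Real.sqrt (2*Real.pi))⁻¹ * 0 by ring]
  refine h3.congr fun z => rfl

lemma integral_id_mul_phi (c : ℝ) : ∫ z in Iic c, z * phi z = -phi c := by
  have h := integral_Iic_of_hasDerivAt_of_tendsto (f := fun z => -phi z)
    (f' := fun z => z * phi z) (a := c) (m := 0)
    (phi_cont.neg.continuousWithinAt)
    (fun x _ => by exact (hasDerivAt_phi x).neg.congr_deriv (by ring))
    (id_mul_phi_integrable.integrableOn)
    (by simpa using phi_tendsto_atBot.neg)
  simpa using h

lemma phi_sq (z : ℝ) : phi z ^ 2 = phi (Real.sqrt 2 * z) / Real.sqrt (2 * Real.pi) := by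
  unfold phi
  have h2 : (Real.sqrt 2 * z) ^ 2 = 2 * z ^ 2 := by
    rw [mul_pow, Real.sq_sqrt (by norm_num : (2:ℝ) ≥ 0)]
  have hc : Real.sqrt (2 * Real.pi) ≠ 0 := by
    have := Real.pi_pos; positivity
  rw [h2, mul_pow, sq (Real.exp _), ← Real.exp_add]
  have harg : -z^2/2 + -z^2/2 = -(2*z^2)/2 := by ring
  rw [harg]
  field_simp

lemma sqrt_two_pi_eq : Real.sqrt (2 * Real.pi) = Real.sqrt 2 * Real.sqrt Real.pi :=
  Real.sqrt_mul (by norm_num) _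

lemma Phi_phi_integrableOn (c : ℝ) : IntegrableOn (fun z => Phi z * (z * phi z)) (Iic c) := by
  refine (Integrable.mono' id_mul_phi_integrable.abs
    ((Phi_cont.mul ((continuous_id.mul phi_cont))).aestronglyMeasurable) ?_).integrableOn
  filter_upwards with z
  rw [Real.norm_eq_abs]
  show |Phi z * (z * phi z)| ≤ |z * phi z|
  rw [abs_mul]
  calc |Phi z| * |z * phi z| ≤ 1 * |z * phi z| := by
        apply mul_le_mul_of_nonneg_right _ (abs_nonneg _)
        rw [abs_of_nonneg (Phi_pos z).le]; exact Phi_le_one z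
    _ = |z * phi z| := one_mul _

lemma hasDerivAt_F (z : ℝ) :
    HasDerivAt (fun z => -(Phi z * phi z) + Phi (Real.sqrt 2 * z) / (2 * Real.sqrt Real.pi))
      (Phi z * (z * phi z)) z := by
  have h1 := (hasDerivAt_Phi z).mul (hasDerivAt_phi z)
  have h2 : HasDerivAt (fun z => Phi (Real.sqrt 2 * z)) (Real.sqrt 2 * phi (Real.sqrt 2 * z)) z := by
    have hin : HasDerivAt (fun y : ℝ => Real.sqrt 2 * y) (Real.sqrt 2) z := by
      simpa using (hasDerivAt_id z).const_mul (Real.sqrt 2)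
    refine HasDerivAt.congr_deriv ?_ (mul_comm _ _)
    exact (hasDerivAt_Phi _).comp z hin
  have h3 := (h1.neg).add (h2.div_const (2 * Real.sqrt Real.pi))
  have key : Real.sqrt 2 * phi (Real.sqrt 2 * z) / (2 * Real.sqrt Real.pi) = phi z ^ 2 := by
    rw [phi_sq, sqrt_two_pi_eq]
    have hss : Real.sqrt 2 * Real.sqrt 2 = 2 := Real.mul_self_sqrt (by norm_num)
    rw [show (2:ℝ) * Real.sqrt Real.pi = Real.sqrt 2 * (Real.sqrt 2 * Real.sqrt Real.pi) by
      rw [← mul_assoc, hss]]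
    exact mul_div_mul_left _ _ (by positivity : (0:ℝ) < Real.sqrt 2).ne'
  exact h3.congr_deriv (by rw [key]; ring)

lemma Phi_comp_tendsto : Tendsto (fun z => Phi (Real.sqrt 2 * z)) atBot (nhds 0) := by
  apply Phi_tendsto_atBot.comp
  have hs2 : (0:ℝ) < Real.sqrt 2 := by positivity
  exact (tendsto_id (α := ℝ)).const_mul_atBot hs2

lemma integral_Phi_mul_phi (c : ℝ) :
    ∫ z in Iic c, Phi z * (z * phi z)
      = -(Phi c * phi c) + Phi (Real.sqrt 2 * c) / (2 * Real.sqrt Real.pi) := by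
  have hcont : Continuous (fun z => -(Phi z * phi z) + Phi (Real.sqrt 2 * z) / (2 * Real.sqrt Real.pi)) := by
    exact ((Phi_cont.mul phi_cont).neg).add ((Phi_cont.comp (continuous_const.mul continuous_id)).div_const _)
  have htend : Tendsto (fun z => -(Phi z * phi z) + Phi (Real.sqrt 2 * z) / (2 * Real.sqrt Real.pi))
      atBot (nhds 0) := by
    have := ((Phi_tendsto_atBot.mul phi_tendsto_atBot).neg).add (Phi_comp_tendsto.div_const (2 * Real.sqrt Real.pi))
    simpa using this
  have h := integral_Iic_of_hasDerivAt_of_tendsto (a := c) (m := 0)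
    hcont.continuousWithinAt (fun x _ => hasDerivAt_F x) (Phi_phi_integrableOn c) htend
  simpa using h

lemma integral_subst (c : ℝ) (g : ℝ → ℝ) :
    ∫ u in Ioo 0 (Phi c), g u = ∫ z in Iio c, phi z * g (Phi z) := by
  rw [← Phi_image c, integral_image_eq_integral_abs_deriv_smul measurableSet_Iio
    (fun x _ => (hasDerivAt_Phi x).hasDerivWithinAt) (Phi_strictMono.injective.injOn) g]
  refine setIntegral_congr_fun measurableSet_Iio fun z _ => ?_
  simp [abs_of_pos (phi_pos z)]

lemma integrableOn_subst (c : ℝ) (g : ℝ → ℝ) :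
    IntegrableOn g (Ioo 0 (Phi c)) ↔ IntegrableOn (fun z => phi z * g (Phi z)) (Iio c) := by
  rw [← Phi_image c, integrableOn_image_iff_integrableOn_abs_deriv_smul measurableSet_Iio
    (fun x _ => (hasDerivAt_Phi x).hasDerivWithinAt) (Phi_strictMono.injective.injOn) g]
  apply integrableOn_congr_fun _ measurableSet_Iio
  intro z _
  simp [abs_of_pos (phi_pos z)]

theorem singular_interval_L2_fit (Φinv : ℝ → ℝ)
    (hinv : ∀ y ∈ Set.Ioo (0 : ℝ) 1, Phi (Φinv y) = y)
    (b : ℝ) (hb0 : 0 < b) (hb : b < 1 / 2)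
    (α β : ℝ)
    (hmin : ∀ α' β' : ℝ,
      (∫ u in Set.Icc (0 : ℝ) b, (Φinv u - α - β * u) ^ 2) ≤
        ∫ u in Set.Icc (0 : ℝ) b, (Φinv u - α' - β' * u) ^ 2) :
    β = (6 / b ^ 3) * (Phi (Real.sqrt 2 * Φinv b) / Real.sqrt Real.pi - b * phi (Φinv b)) ∧
    α = 2 * phi (Φinv b) / b - 3 * Phi (Real.sqrt 2 * Φinv b) / (b ^ 2 * Real.sqrt Real.pi) := by
  have hπ : (0:ℝ) < Real.sqrt Real.pi := Real.sqrt_pos.2 Real.pi_pos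
  set zb := Φinv b with hzb
  have hPzb : Phi zb = b := hinv b ⟨hb0, by linarith⟩
  have hinvPhi : ∀ z ∈ Iio zb, Φinv (Phi z) = z := by
    intro z hz
    have h1 : Phi z < b := hPzb ▸ Phi_strictMono hz
    exact Phi_strictMono.injective (hinv _ ⟨Phi_pos z, by linarith⟩)
  have hIoo : Ioo (0:ℝ) b = Ioo 0 (Phi zb) := by rw [hPzb]
  -- integrals
  have hI1 : ∫ u in Ioo (0:ℝ) b, Φinv u = -phi zb := by
    rw [hIoo, integral_subst zb Φinv]
    have h := setIntegral_congr_fun (f := fun z => phi z * Φinv (Phi z))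
      (g := fun z => z * phi z) (μ := volume) (measurableSet_Iio (a := zb))
      (fun z hz => by simp only [hinvPhi z hz]; ring)
    rw [h, ← integral_Iic_eq_integral_Iio, integral_id_mul_phi]
  have hI2 : ∫ u in Ioo (0:ℝ) b, u * Φinv u
      = -(b * phi zb) + Phi (Real.sqrt 2 * zb) / (2 * Real.sqrt Real.pi) := by
    rw [hIoo, integral_subst zb (fun u => u * Φinv u)]
    have h := setIntegral_congr_fun (f := fun z => phi z * (Phi z * Φinv (Phi z)))
      (g := fun z => Phi z * (z * phi z)) (μ := volume) (measurableSet_Iio (a := zb))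
      (fun z hz => by simp only [hinvPhi z hz]; ring)
    rw [h, ← integral_Iic_eq_integral_Iio, integral_Phi_mul_phi, hPzb]
  -- integrability
  have hf : IntegrableOn Φinv (Ioo (0:ℝ) b) := by
    rw [hIoo, integrableOn_subst zb Φinv]
    exact (id_mul_phi_integrable.integrableOn).congr_fun
      (fun z hz => by simp only [hinvPhi z hz]; ring) measurableSet_Iio
  have hf2 : IntegrableOn (fun u => Φinv u ^ 2) (Ioo (0:ℝ) b) := by
    rw [hIoo, integrableOn_subst zb (fun u => Φinv u ^ 2)]
    exact (sq_mul_phi_integrable.integrableOn).congr_fun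
      (fun z hz => by simp only [hinvPhi z hz]; ring) measurableSet_Iio
  have hfu : IntegrableOn (fun u => u * Φinv u) (Ioo (0:ℝ) b) := by
    rw [hIoo, integrableOn_subst zb (fun u => u * Φinv u)]
    exact ((Phi_phi_integrableOn zb).mono_set Iio_subset_Iic_self).congr_fun
      (fun z hz => by simp only [hinvPhi z hz]; ring) measurableSet_Iio
  have hcont_int : ∀ (p : ℝ → ℝ), Continuous p → IntegrableOn p (Ioo 0 b) :=
    fun p hp => (hp.integrableOn_Icc).mono_set Ioo_subset_Icc_self
  -- volume facts
  have hvol : (volume (Ioo (0:ℝ) b)).toReal = b := by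
    rw [Real.volume_Ioo]
    simp [hb0.le]
  have hconst : ∀ c : ℝ, (∫ _ in Ioo (0:ℝ) b, c) = c * b := by
    intro c
    rw [setIntegral_const, measureReal_def, hvol, smul_eq_mul, mul_comm]
  have hu1 : ∫ u in Ioo (0:ℝ) b, u = b^2/2 := by
    rw [← integral_Ioc_eq_integral_Ioo, ← intervalIntegral.integral_of_le hb0.le,
      integral_id]
    ring
  have hu2 : ∫ u in Ioo (0:ℝ) b, u^2 = b^3/3 := by
    rw [← integral_Ioc_eq_integral_Ioo, ← intervalIntegral.integral_of_le hb0.le,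
      integral_pow]
    norm_num
  -- the error function
  set e : ℝ → ℝ := fun u => Φinv u - α - β * u with he_def
  have hc1 : Continuous fun u : ℝ => α + β * u := continuous_const.add (continuous_const.mul continuous_id)
  have hcu : Continuous fun u : ℝ => α * u := continuous_const.mul continuous_id
  have hcu2 : Continuous fun u : ℝ => β * u^2 := continuous_const.mul (continuous_pow 2)
  have hlin : IntegrableOn (fun u => α + β * u) (Ioo (0:ℝ) b) :=
    hcont_int _ hc1
  have he : IntegrableOn e (Ioo (0:ℝ) b) := by
    have : e = fun u => Φinv u - (α + β * u) := by funext u; simp only [he_def]; ring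
    rw [this]; exact hf.sub hlin
  have he2 : IntegrableOn (fun u => e u ^ 2) (Ioo (0:ℝ) b) := by
    have : (fun u => e u ^ 2) = fun u =>
        (Φinv u ^ 2 - (2*α) * Φinv u - (2*β) * (u * Φinv u)) + (α + β*u)^2 := by
      funext u; simp only [he_def]; ring
    rw [this]
    exact ((hf2.sub (hf.const_mul _)).sub (hfu.const_mul _)).add (hcont_int _ (hc1.pow 2))
  have hue : IntegrableOn (fun u => u * e u) (Ioo (0:ℝ) b) := by
    have : (fun u => u * e u) = fun u => u * Φinv u - (α * u + β * u^2) := by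
      funext u; simp only [he_def]; ring
    rw [this]; exact hfu.sub (hcont_int _ (hcu.add hcu2))
  -- normal equation A
  set E := ∫ u in Ioo (0:ℝ) b, e u with hE_def
  have hA : E = 0 := by
    have hq : ∀ t : ℝ, 0 ≤ -2*t*E + t^2 * b := by
      intro t
      have h := hmin (α + t) β
      rw [integral_Icc_eq_integral_Ioo, integral_Icc_eq_integral_Ioo] at h
      have hrepr : (fun u => (Φinv u - (α + t) - β * u)^2)
          = fun u => (e u ^ 2 - (2*t) * e u) + t^2 := by
        funext u; simp only [he_def]; ring
      have hexp : (∫ u in Ioo (0:ℝ) b, (Φinv u - (α + t) - β * u)^2)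
          = (∫ u in Ioo (0:ℝ) b, e u ^ 2) - 2*t*E + t^2 * b := by
        have hcm : IntegrableOn (fun u => (2*t) * e u) (Ioo (0:ℝ) b) volume := he.const_mul _
        have hs1 : IntegrableOn (fun u => e u ^ 2 - (2*t) * e u) (Ioo (0:ℝ) b) volume := he2.sub hcm
        rw [hrepr, integral_add hs1 (hcont_int (fun _ => t^2) continuous_const),
          integral_sub he2 hcm, integral_const_mul, hconst]
      rw [hexp] at h
      linarith
    have h1 := hq (E/b)
    have h2 : -2*(E/b)*E + (E/b)^2 * b = -(E^2)/b := by
      field_simp; ring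
    rw [h2] at h1
    have h3 : (0:ℝ) ≤ b * (-(E^2)/b) := mul_nonneg hb0.le h1
    rw [mul_div_cancel₀ _ hb0.ne'] at h3
    have h4 : E^2 = 0 := le_antisymm (by linarith) (sq_nonneg E)
    exact pow_eq_zero_iff (by norm_num) |>.mp h4
  -- normal equation B
  set B := ∫ u in Ioo (0:ℝ) b, u * e u with hB_def
  have hB : B = 0 := by
    have hq : ∀ t : ℝ, 0 ≤ -2*t*B + t^2 * (b^3/3) := by
      intro t
      have h := hmin α (β + t)
      rw [integral_Icc_eq_integral_Ioo, integral_Icc_eq_integral_Ioo] at h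
      have hrepr : (fun u => (Φinv u - α - (β + t) * u)^2)
          = fun u => (e u ^ 2 - (2*t) * (u * e u)) + t^2 * u^2 := by
        funext u; simp only [he_def]; ring
      have hexp : (∫ u in Ioo (0:ℝ) b, (Φinv u - α - (β + t) * u)^2)
          = (∫ u in Ioo (0:ℝ) b, e u ^ 2) - 2*t*B + t^2 * (b^3/3) := by
        have hcm : IntegrableOn (fun u => (2*t) * (u * e u)) (Ioo (0:ℝ) b) volume := hue.const_mul _
        have hs1 : IntegrableOn (fun u => e u ^ 2 - (2*t) * (u * e u)) (Ioo (0:ℝ) b) volume := he2.sub hcm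
        rw [hrepr, integral_add hs1 (hcont_int (fun u => t^2 * u^2) (continuous_const.mul (continuous_pow 2))),
          integral_sub he2 hcm, integral_const_mul, integral_const_mul, hu2]
      rw [hexp] at h
      linarith
    have hb3 : (0:ℝ) < b^3/3 := by positivity
    have h1 := hq (B/(b^3/3))
    have h2 : -2*(B/(b^3/3))*B + (B/(b^3/3))^2 * (b^3/3) = -(B^2)/(b^3/3) := by
      field_simp; ring
    rw [h2] at h1
    have h3 : (0:ℝ) ≤ (b^3/3) * (-(B^2)/(b^3/3)) := mul_nonneg hb3.le h1
    rw [mul_div_cancel₀ _ hb3.ne'] at h3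
    have h4 : B^2 = 0 := le_antisymm (by linarith) (sq_nonneg B)
    exact pow_eq_zero_iff (by norm_num) |>.mp h4
  -- evaluate E and B
  have hEval : E = -phi zb - (α * b + β * (b^2/2)) := by
    rw [hE_def]
    have : e = fun u => Φinv u - (α + β * u) := by funext u; simp only [he_def]; ring
    rw [this, integral_sub hf hlin, hI1,
      integral_add (hcont_int (fun _ => α) continuous_const)
        (hcont_int (fun u => β * u) (continuous_const.mul continuous_id)),
      hconst, integral_const_mul, hu1]
  have hBval : B = (-(b * phi zb) + Phi (Real.sqrt 2 * zb) / (2 * Real.sqrt Real.pi))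
      - (α * (b^2/2) + β * (b^3/3)) := by
    rw [hB_def]
    have : (fun u => u * e u) = fun u => u * Φinv u - (α * u + β * u^2) := by
      funext u; simp only [he_def]; ring
    rw [this, integral_sub hfu (hcont_int (fun u => α * u + β * u^2) (hcu.add hcu2)), hI2,
      integral_add (hcont_int (fun u => α * u) hcu) (hcont_int (fun u => β * u^2) hcu2),
      integral_const_mul, integral_const_mul, hu1, hu2]
  rw [hEval] at hA
  rw [hBval] at hB
  have hπ' : Real.sqrt Real.pi ≠ 0 := hπ.ne'
  field_simp at hB
  constructor
  · field_simp
    linear_combination (6*b*Real.sqrt Real.pi) * hA - 2 * hB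
  · field_simp
    linear_combination (-4*b*Real.sqrt Real.pi) * hA + hB
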